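/- arXiv:1103.1689 — 2 statements merged into one kernel-verified Lean document; each statement's English description precedes it below -/
import Mathlib

section
/- Let G(k,z) = -((k-2)·z - k·√(z² - 4k + 4)) / (2·(z² - k²)) for z > 2√(k-1), and define Q(a,k,ρ) = ρ + 2a√(k-1) - a/G(k, ρ/a + 2√(k-1)). Then lim_{ρ→∞} ρ·Q(a,k,ρ) = k·a², for every a > 0 and integer k ≥ 3. -/
noncomputable def G (k : ℕ) (z : ℝ) : ℝ :=
  -(((k : ℝ) - 2) * z - k * Real.sqrt (z ^ 2 - 4 * k + 4)) / (2 * (z ^ 2 - (k : ℝ) ^ 2))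

noncomputable def Q (a : ℝ) (k : ℕ) (ρ : ℝ) : ℝ :=
  ρ + 2 * a * Real.sqrt ((k : ℝ) - 1) - a / G k (ρ / a + 2 * Real.sqrt ((k : ℝ) - 1))

lemma Q_eq (a : ℝ) (ha : 0 < a) (k : ℕ) (hk : 3 ≤ k) (ρ : ℝ) (hρ : a * k < ρ) :
    Q a k ρ = 2 * a * k /
      ((ρ / a + 2 * Real.sqrt ((k : ℝ) - 1)) +
        Real.sqrt ((ρ / a + 2 * Real.sqrt ((k : ℝ) - 1)) ^ 2 - 4 * k + 4)) := by
  have hk3 : (3 : ℝ) ≤ (k : ℝ) := by exact_mod_cast hk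
  set u := Real.sqrt ((k : ℝ) - 1) with hu
  have hu0 : 0 ≤ u := Real.sqrt_nonneg _
  set z := ρ / a + 2 * u with hz_def
  have hρ0 : 0 < ρ := lt_trans (by positivity) hρ
  have hzk : (k : ℝ) < z := by
    have : (k : ℝ) < ρ / a := (lt_div_iff₀ ha).2 (by linarith [hρ, mul_comm a (k:ℝ)])
    have h2 : 0 ≤ 2 * u := by positivity
    simp only [hz_def]; linarith
  have hz0 : 0 < z := lt_trans (by linarith) hzk
  have hD : 0 < z ^ 2 - (k : ℝ) ^ 2 := by nlinarith
  have hr : 0 ≤ z ^ 2 - 4 * k + 4 := by nlinarith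
  set w := Real.sqrt (z ^ 2 - 4 * k + 4) with hw_def
  have hw0 : 0 ≤ w := Real.sqrt_nonneg _
  have hw2 : w ^ 2 = z ^ 2 - 4 * k + 4 := Real.sq_sqrt hr
  have hM : ((k : ℝ) - 2) * z < k * w := by
    have hsq : (((k : ℝ) - 2) * z) ^ 2 < ((k : ℝ) * w) ^ 2 := by nlinarith
    have h1 : 0 ≤ ((k : ℝ) - 2) * z := by nlinarith
    have h2 : 0 ≤ (k : ℝ) * w := by positivity
    nlinarith
  have hN : ((k : ℝ) - 2) * z - k * w ≠ 0 := by linarith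
  have hGval : G k z = -(((k : ℝ) - 2) * z - k * w) / (2 * (z ^ 2 - (k : ℝ) ^ 2)) := rfl
  have hG0 : G k z ≠ 0 := by
    rw [hGval]
    have : 0 < -(((k : ℝ) - 2) * z - k * w) := by linarith
    positivity
  have haz : a * z = ρ + 2 * a * u := by
    rw [hz_def]; field_simp; try ring
  have hzw : 0 < z + w := by linarith
  have hQ : Q a k ρ = ρ + 2 * a * u - a / G k z := rfl
  rw [hQ, hGval]
  rw [eq_div_iff (ne_of_gt hzw)]
  have hD' : z ^ 2 - (k:ℝ) ^ 2 ≠ 0 := ne_of_gt hD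
  have hN2 : (k:ℝ) * w - ((k:ℝ) - 2) * z ≠ 0 := by linarith
  field_simp
  linear_combination (-(((k:ℝ) - 2) * z - (k:ℝ) * w) * (z + w)) * haz - a * (k:ℝ) * z * hw2

theorem Q_limit_rho_infty (a : ℝ) (ha : 0 < a) (k : ℕ) (hk : 3 ≤ k) :
    Filter.Tendsto (fun ρ => ρ * Q a k ρ) Filter.atTop
      (nhds ((k : ℝ) * a ^ 2)) := by
  have hk3 : (3 : ℝ) ≤ (k : ℝ) := by exact_mod_cast hk
  set u := Real.sqrt ((k : ℝ) - 1) with hu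
  have hu0 : 0 ≤ u := Real.sqrt_nonneg _
  set g : ℝ → ℝ := fun ρ =>
    (1 / a + 2 * u / ρ) + Real.sqrt ((1 / a + 2 * u / ρ) ^ 2 - (4 * k - 4) / ρ ^ 2) with hg
  -- limit of g
  have h1 : Filter.Tendsto (fun ρ : ℝ => 2 * u / ρ) Filter.atTop (nhds 0) := by
    simpa [div_eq_mul_inv] using tendsto_inv_atTop_zero.const_mul (2 * u)
  have h2 : Filter.Tendsto (fun ρ : ℝ => (4 * (k : ℝ) - 4) / ρ ^ 2) Filter.atTop (nhds 0) := by
    have : Filter.Tendsto (fun ρ : ℝ => ρ ^ 2) Filter.atTop Filter.atTop :=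
      Filter.tendsto_pow_atTop two_ne_zero
    simpa [div_eq_mul_inv] using (tendsto_inv_atTop_zero.comp this).const_mul (4 * (k : ℝ) - 4)
  have hinner : Filter.Tendsto (fun ρ : ℝ => (1 / a + 2 * u / ρ) ^ 2 - (4 * k - 4) / ρ ^ 2)
      Filter.atTop (nhds ((1 / a) ^ 2)) := by
    have := (((tendsto_const_nhds (x := 1/a)).add h1).pow 2).sub h2
    simpa using this
  have hsqrt : Filter.Tendsto (fun ρ : ℝ => Real.sqrt ((1 / a + 2 * u / ρ) ^ 2 - (4 * k - 4) / ρ ^ 2))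
      Filter.atTop (nhds (1 / a)) := by
    have := (Real.continuous_sqrt.tendsto ((1 / a) ^ 2)).comp hinner
    rwa [Real.sqrt_sq (by positivity)] at this
  have hgt : Filter.Tendsto g Filter.atTop (nhds (2 / a)) := by
    have := ((tendsto_const_nhds (x := 1/a)).add h1).add hsqrt
    have h : (1 / a + 0) + 1 / a = 2 / a := by ring
    rw [← h]
    exact this
  have hlim : Filter.Tendsto (fun ρ => 2 * a * (k : ℝ) / g ρ) Filter.atTop
      (nhds ((k : ℝ) * a ^ 2)) := by
    have h2a : (2 : ℝ) / a ≠ 0 := by positivity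
    have := Filter.Tendsto.div (tendsto_const_nhds (x := 2 * a * (k : ℝ))) hgt h2a
    convert this using 2
    · rfl
    field_simp
  refine hlim.congr' ?_
  filter_upwards [Filter.eventually_gt_atTop (a * k)] with ρ hρ
  have hρ0 : 0 < ρ := lt_trans (by positivity) hρ
  rw [Q_eq a ha k hk ρ hρ]
  set z := ρ / a + 2 * u with hz_def
  have hzk : (k : ℝ) < z := by
    have : (k : ℝ) < ρ / a := (lt_div_iff₀ ha).2 (by linarith [mul_comm a (k:ℝ)])
    have h2 : 0 ≤ 2 * u := by positivity
    simp only [hz_def]; linarith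
  have hz0 : 0 < z := lt_trans (by linarith) hzk
  have hr : 0 ≤ z ^ 2 - 4 * k + 4 := by nlinarith
  set w := Real.sqrt (z ^ 2 - 4 * k + 4) with hw_def
  have hw0 : 0 ≤ w := Real.sqrt_nonneg _
  -- rewrite sqrt in g
  have hzρ : 1 / a + 2 * u / ρ = z / ρ := by
    rw [hz_def]; field_simp; try ring
  have hsq_eq : (z / ρ) ^ 2 - (4 * (k : ℝ) - 4) / ρ ^ 2 = (z ^ 2 - 4 * k + 4) / ρ ^ 2 := by
    field_simp
    ring
  have hgρ : g ρ = (z + w) / ρ := by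
    simp only [hg]
    rw [hzρ, hsq_eq, Real.sqrt_div hr, Real.sqrt_sq hρ0.le]
    ring
  rw [hgρ, div_div_eq_mul_div]
  ring
end

section
/- For every integer k ≥ 3 and every z ≥ 2√(k-1), with G(k,z) = -((k-2)·z - k·√(z² - 4k + 4))/(2·(z² - k²)), one has 2·√(z·G(k,z)) ≤ √8 · √((k-1)/(k-2)) ≤ 4. -/
theorem sqrt_zG_bound (k : ℕ) (hk : 3 ≤ k) (z : ℝ) (hz : 2 * Real.sqrt ((k : ℝ) - 1) ≤ z) :
    2 * Real.sqrt (z * G k z) ≤ Real.sqrt 8 * Real.sqrt (((k : ℝ) - 1) / ((k : ℝ) - 2)) ∧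
    Real.sqrt 8 * Real.sqrt (((k : ℝ) - 1) / ((k : ℝ) - 2)) ≤ 4 := by
  have hk3 : (3:ℝ) ≤ (k:ℝ) := by exact_mod_cast hk
  set K := (k:ℝ) with hK
  have hK2 : 0 < K - 2 := by linarith
  have hK1 : 0 < K - 1 := by linarith
  have hsq0 : 0 < Real.sqrt (K - 1) := Real.sqrt_pos.mpr hK1
  have hz0 : 0 < z := lt_of_lt_of_le (by positivity) hz
  have hzsq : 4 * (K - 1) ≤ z ^ 2 := by
    nlinarith [Real.sq_sqrt hK1.le, Real.sqrt_nonneg (K-1)]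
  set s := Real.sqrt (z ^ 2 - 4 * K + 4) with hs
  have hs0 : 0 ≤ s := Real.sqrt_nonneg _
  have hs2 : s ^ 2 = z ^ 2 - 4 * K + 4 := Real.sq_sqrt (by nlinarith)
  have key : z * G k z ≤ 2 * (K - 1) / (K - 2) := by
    by_cases hzk : z = K
    · have hG0 : G k z = 0 := by
        unfold G; rw [hzk]; rw [sub_self, mul_zero, div_zero]
      rw [hG0, mul_zero]; positivity
    · have hD : 0 < K * s + (K - 2) * z :=
        add_pos_of_nonneg_of_pos (mul_nonneg (by linarith) hs0) (mul_pos hK2 hz0)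
      have hden : z ^ 2 - K ^ 2 ≠ 0 := by
        intro h
        have h' : (z - K) * (z + K) = 0 := by linear_combination h
        rcases mul_eq_zero.mp h' with h1 | h1
        · exact hzk (by linarith)
        · linarith
      have hG : G k z = 2 * (K - 1) / (K * s + (K - 2) * z) := by
        unfold G
        rw [div_eq_div_iff (mul_ne_zero two_ne_zero hden) hD.ne']
        linear_combination (K ^ 2) * hs2
      rw [hG]
      have e : z * (2 * (K - 1) / (K * s + (K - 2) * z))
          = (2 * (K - 1) * z) / (K * s + (K - 2) * z) := by ring
      rw [e, div_le_div_iff₀ hD hK2]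
      nlinarith [mul_nonneg (mul_nonneg hK1.le (by linarith : (0:ℝ) ≤ K)) hs0]
  have hsqrt4 : Real.sqrt 4 = 2 := by
    rw [show (4:ℝ) = 2 ^ 2 by norm_num, Real.sqrt_sq (by norm_num : (0:ℝ) ≤ 2)]
  have h2 : Real.sqrt 8 * Real.sqrt ((K - 1) / (K - 2))
      = Real.sqrt (8 * ((K - 1) / (K - 2))) :=
    (Real.sqrt_mul (by norm_num) _).symm
  constructor
  · have h1 : 2 * Real.sqrt (z * G k z) = Real.sqrt (4 * (z * G k z)) := by
      rw [Real.sqrt_mul (by norm_num : (0:ℝ) ≤ 4), hsqrt4]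
    rw [h1, h2]
    apply Real.sqrt_le_sqrt
    have e : 8 * ((K - 1) / (K - 2)) = 4 * (2 * (K - 1) / (K - 2)) := by ring
    rw [e]; linarith
  · rw [h2]
    have hq : (K - 1) / (K - 2) ≤ 2 := by
      rw [div_le_iff₀ hK2]; linarith
    calc Real.sqrt (8 * ((K - 1) / (K - 2))) ≤ Real.sqrt 16 :=
          Real.sqrt_le_sqrt (by linarith)
      _ = 4 := by
          rw [show (16:ℝ) = 4 ^ 2 by norm_num, Real.sqrt_sq (by norm_num : (0:ℝ) ≤ 4)]
end
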